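/- Let δ > 0 and let D₁, …, Dₙ be pairwise disjoint closed disks of radius δ in ℝ², each of which intersects the image of a closed rectifiable curve of length L. Then πδ²·n ≤ 4δL + 4πδ²; in particular, n ≤ 4L/(πδ) + 4. -/

import Mathlib

open Set Metric MeasureTheory Real

-- volume of a 2D closed ball
lemma vol_ball2 (c : EuclideanSpace ℝ (Fin 2)) (r : ℝ) (hr : 0 ≤ r) :
    volume (closedBall c r) = ENNReal.ofReal (π * r ^ 2) := by
  rw [EuclideanSpace.volume_closedBall, Fintype.card_fin]
  have h2 : (((2:ℕ):ℝ) / 2 + 1) = 2 := by norm_num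
  rw [h2, Real.Gamma_two, div_one, Real.sq_sqrt pi_pos.le,
    ← ENNReal.ofReal_pow hr, ← ENNReal.ofReal_mul (pow_nonneg hr 2), mul_comm]

lemma lune_arith {R d h s : ℝ} (hR : 0 ≤ R) (hd : 0 < d)
    (hsq1 : h ^ 2 + (s - d) ^ 2 ≤ R ^ 2) (hsq2 : R ^ 2 < h ^ 2 + s ^ 2) :
    (-R ≤ h ∧ h ≤ R) ∧ Real.sqrt (R ^ 2 - h ^ 2) < s ∧ s - d ≤ Real.sqrt (R ^ 2 - h ^ 2) := by
  have hhR : h ^ 2 ≤ R ^ 2 := by nlinarith [sq_nonneg (s - d)]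
  have hIcc : -R ≤ h ∧ h ≤ R := by
    constructor
    · nlinarith [sq_nonneg (h + R)]
    · nlinarith [sq_nonneg (h - R)]
  refine ⟨hIcc, ?_, ?_⟩
  · have hs2 : R ^ 2 - h ^ 2 < s ^ 2 := by linarith
    have hspos : 0 < s := by
      by_contra hns
      push_neg at hns
      have hcmp : s ^ 2 ≤ (s - d) ^ 2 := by nlinarith
      linarith
    exact (Real.sqrt_lt' hspos).2 hs2
  · have h1 : (s - d) ^ 2 ≤ R ^ 2 - h ^ 2 := by linarith
    calc s - d ≤ |s - d| := le_abs_self _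
      _ = Real.sqrt ((s - d) ^ 2) := (Real.sqrt_sq_eq_abs _).symm
      _ ≤ Real.sqrt (R ^ 2 - h ^ 2) := Real.sqrt_le_sqrt h1

-- lune bound
lemma lune_vol (R : ℝ) (hR : 0 ≤ R) (x y : EuclideanSpace ℝ (Fin 2)) :
    volume (closedBall y R \ closedBall x R) ≤ ENNReal.ofReal (2 * R * dist x y) := by
  rcases eq_or_lt_of_le (dist_nonneg (x := x) (y := y)) with h0 | hd
  · obtain rfl : x = y := by rw [← dist_eq_zero]; exact h0.symm
    simp
  set d := dist x y with hdd
  set u : EuclideanSpace ℝ (Fin 2) := (d⁻¹ : ℝ) • (y - x) with hu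
  have hnu : ‖u‖ = 1 := by
    rw [hu, norm_smul, norm_inv, Real.norm_eq_abs, abs_of_pos hd]
    rw [show ‖y - x‖ = d by rw [hdd, dist_comm, dist_eq_norm]]
    field_simp
  have hfr : Module.finrank ℝ (EuclideanSpace ℝ (Fin 2)) = Fintype.card (Fin 2) := by
    simp [finrank_euclideanSpace]
  have ho : Orthonormal ℝ (({1} : Set (Fin 2)).restrict (fun _ => u)) := by
    constructor
    · intro i; exact hnu
    · intro i j hij
      exact absurd (Subtype.ext (by
        have hi := i.2; have hj := j.2
        simp only [Set.mem_singleton_iff] at hi hj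
        rw [hi, hj])) hij
  obtain ⟨b, hb⟩ := ho.exists_orthonormalBasis_extension_of_card_eq hfr
  have hb1 : b 1 = u := hb 1 rfl
  -- coordinate map
  set φ : EuclideanSpace ℝ (Fin 2) → ℝ × ℝ :=
    fun z => (MeasurableEquiv.finTwoArrow
      ((MeasurableEquiv.toLp 2 (Fin 2 → ℝ)).symm (b.repr (z - x)))) with hφdef
  have hφ : MeasurePreserving φ volume volume :=
    ((MeasureTheory.volume_preserving_finTwoArrow ℝ).comp
      ((EuclideanSpace.volume_preserving_symm_measurableEquiv_toLp (Fin 2)).comp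
        (b.measurePreserving_repr.comp (measurePreserving_sub_right volume x))))
  set g : ℝ → ℝ := fun h => Real.sqrt (R ^ 2 - h ^ 2) with hg
  have hgc : Continuous g := by
    apply Real.continuous_sqrt.comp
    exact continuous_const.sub (continuous_pow 2)
  set S : Set (ℝ × ℝ) := {p | p.1 ∈ Icc (-R) R ∧ p.2 - g p.1 ∈ Ioc 0 d} with hSdef
  set T : ℝ × ℝ → ℝ × ℝ := fun p => (p.1, p.2 - g p.1) with hTdef
  have hSeq : S = T ⁻¹' (Icc (-R) R ×ˢ Ioc 0 d) := rfl
  have hTm : Measurable T :=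
    measurable_fst.prodMk (measurable_snd.sub (hgc.measurable.comp measurable_fst))
  have hSm : MeasurableSet S := by
    rw [hSeq]; exact hTm (measurableSet_Icc.prod measurableSet_Ioc)
  have hT : MeasurePreserving T volume volume := by
    rw [MeasureTheory.Measure.volume_eq_prod]
    exact (MeasurePreserving.id volume).skew_product (g := fun a y => y - g a)
      (by exact measurable_snd.sub (hgc.measurable.comp measurable_fst))
      (Filter.Eventually.of_forall fun a => map_sub_right_eq_self volume (g a))
  have hvolS : volume S = ENNReal.ofReal (2 * R * d) := by
    rw [hSeq, hT.measure_preimage ((measurableSet_Icc.prod measurableSet_Ioc)).nullMeasurableSet,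
      MeasureTheory.Measure.volume_eq_prod, Measure.prod_prod, Real.volume_Icc, Real.volume_Ioc]
    rw [← ENNReal.ofReal_mul (by linarith), sub_zero, sub_neg_eq_add]
    ring_nf
  -- the containment
  have hsub : closedBall y R \ closedBall x R ⊆ φ ⁻¹' S := by
    rintro z ⟨hz1, hz2⟩
    set w := b.repr (z - x) with hw
    have hφz : φ z = (w 0, w 1) := rfl
    have hzx : R < ‖z - x‖ := by
      rw [mem_closedBall, not_le, dist_eq_norm] at hz2; exact hz2
    have hzy : ‖z - y‖ ≤ R := by rwa [mem_closedBall, dist_eq_norm] at hz1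
    have hnormw : ∀ v : EuclideanSpace ℝ (Fin 2), ‖v‖ ^ 2 = v 0 ^ 2 + v 1 ^ 2 := by
      intro v
      rw [EuclideanSpace.norm_eq, Real.sq_sqrt (by positivity), Fin.sum_univ_two,
        Real.norm_eq_abs, Real.norm_eq_abs, sq_abs, sq_abs]
    have hx2 : ‖z - x‖ ^ 2 = w 0 ^ 2 + w 1 ^ 2 := by
      rw [← b.repr.norm_map (z - x)]; exact hnormw _
    have hyrepr : b.repr (z - y) = w - d • EuclideanSpace.single 1 (1 : ℝ) := by
      have hzy' : z - y = (z - x) - d • b 1 := by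
        rw [hb1, hu, smul_smul, mul_inv_cancel₀ (ne_of_gt hd), one_smul]; abel
      rw [hzy', map_sub, LinearIsometryEquiv.map_smul, OrthonormalBasis.repr_self]
    have hy0 : (b.repr (z - y)) 0 = w 0 := by
      rw [hyrepr]; simp [EuclideanSpace.single_apply]
    have hy1 : (b.repr (z - y)) 1 = w 1 - d := by
      rw [hyrepr]; simp [EuclideanSpace.single_apply]
    have hy2 : ‖z - y‖ ^ 2 = w 0 ^ 2 + (w 1 - d) ^ 2 := by
      rw [← b.repr.norm_map (z - y), hnormw _, hy0, hy1]
    set h := w 0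
    set s := w 1
    have hsq1 : h ^ 2 + (s - d) ^ 2 ≤ R ^ 2 := by
      rw [← hy2]; exact pow_le_pow_left₀ (norm_nonneg _) hzy 2
    have hsq2 : R ^ 2 < h ^ 2 + s ^ 2 := by
      rw [← hx2]; exact pow_lt_pow_left₀ hzx hR (by norm_num)
    obtain ⟨hhIcc', hlower, hupper⟩ := lune_arith hR hd hsq1 hsq2
    have hhIcc : h ∈ Icc (-R) R := hhIcc'
    show φ z ∈ S
    rw [hφz]
    refine ⟨hhIcc, ?_, ?_⟩
    · simpa using sub_pos.2 hlower
    · simpa using sub_le_iff_le_add'.2 (by linarith : s ≤ g h + d)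
  calc volume (closedBall y R \ closedBall x R) ≤ volume (φ ⁻¹' S) := measure_mono hsub
    _ = volume S := hφ.measure_preimage hSm.nullMeasurableSet
    _ = ENNReal.ofReal (2 * R * d) := hvolS

lemma chain_vol (R : ℝ) (hR : 0 ≤ R) (q : ℕ → EuclideanSpace ℝ (Fin 2)) :
    ∀ m : ℕ, volume (⋃ k ∈ Finset.range (m + 1), closedBall (q k) R) ≤
      ENNReal.ofReal (π * R ^ 2) +
        ∑ k ∈ Finset.range m, ENNReal.ofReal (2 * R * dist (q k) (q (k + 1))) := by
  intro m
  induction m with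
  | zero =>
      simp [vol_ball2 _ _ hR]
  | succ m ih =>
      have hsplit : (⋃ k ∈ Finset.range (m + 2), closedBall (q k) R) ⊆
          (⋃ k ∈ Finset.range (m + 1), closedBall (q k) R) ∪
            (closedBall (q (m + 1)) R \ closedBall (q m) R) := by
        intro z hz
        simp only [Set.mem_iUnion, Finset.mem_range] at hz
        obtain ⟨k, hk, hzk⟩ := hz
        rcases Nat.lt_or_ge k (m + 1) with hk' | hk'
        · left; exact Set.mem_biUnion (Finset.mem_range.2 hk') hzk
        · have hkeq : k = m + 1 := le_antisymm (Nat.lt_succ_iff.1 hk) hk'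
          subst hkeq
          by_cases hzm : z ∈ closedBall (q m) R
          · left; exact Set.mem_biUnion (Finset.mem_range.2 (Nat.lt_succ_self m)) hzm
          · right; exact ⟨hzk, hzm⟩
      calc volume (⋃ k ∈ Finset.range (m + 2), closedBall (q k) R)
          ≤ volume ((⋃ k ∈ Finset.range (m + 1), closedBall (q k) R) ∪
              (closedBall (q (m + 1)) R \ closedBall (q m) R)) := measure_mono hsplit
        _ ≤ volume (⋃ k ∈ Finset.range (m + 1), closedBall (q k) R) +
              volume (closedBall (q (m + 1)) R \ closedBall (q m) R) := measure_union_le _ _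
        _ ≤ (ENNReal.ofReal (π * R ^ 2) +
              ∑ k ∈ Finset.range m, ENNReal.ofReal (2 * R * dist (q k) (q (k + 1)))) +
              ENNReal.ofReal (2 * R * dist (q m) (q (m + 1))) :=
            add_le_add ih (lune_vol R hR (q m) (q (m + 1)))
        _ = ENNReal.ofReal (π * R ^ 2) +
              ∑ k ∈ Finset.range (m + 1), ENNReal.ofReal (2 * R * dist (q k) (q (k + 1))) := by
            rw [Finset.sum_range_succ, add_assoc]

/-- Packing bound: if `n` pairwise disjoint closed disks of radius `δ` each intersect the
image of a closed rectifiable curve of length `L`, then `πδ²n ≤ 4δL + 4πδ²`, and in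
particular `n ≤ 4L/(πδ) + 4`. -/
theorem stmt_1 (n : ℕ) (δ L : ℝ) (hδ : 0 < δ)
    (c : Fin n → EuclideanSpace ℝ (Fin 2))
    (γ : ℝ → EuclideanSpace ℝ (Fin 2))
    (hcont : ContinuousOn γ (Icc 0 1))
    (hclosed : γ 0 = γ 1)
    (hrect : eVariationOn γ (Icc 0 1) ≠ ⊤)
    (hlen : (eVariationOn γ (Icc 0 1)).toReal = L)
    (hdisj : ∀ i j : Fin n, i ≠ j →
      Disjoint (closedBall (c i) δ) (closedBall (c j) δ))
    (hvisit : ∀ i : Fin n, ((γ '' Icc 0 1) ∩ closedBall (c i) δ).Nonempty) :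
    π * δ ^ 2 * n ≤ 4 * δ * L + 4 * π * δ ^ 2 ∧
      (n : ℝ) ≤ 4 * L / (π * δ) + 4 := by
  have hL0 : 0 ≤ L := hlen ▸ ENNReal.toReal_nonneg
  -- reduce the second claim to the first
  suffices hfirst : π * δ ^ 2 * n ≤ 4 * δ * L + 4 * π * δ ^ 2 by
    refine ⟨hfirst, ?_⟩
    have hπδ : 0 < π * δ := mul_pos pi_pos hδ
    have h2 : (n : ℝ) * (π * δ) ≤ 4 * L + 4 * (π * δ) := by
      have h2' : ((n : ℝ) * (π * δ)) * δ ≤ (4 * L + 4 * (π * δ)) * δ := by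
        nlinarith [hfirst]
      exact le_of_mul_le_mul_right h2' hδ
    have h3 : 4 * L / (π * δ) + 4 = (4 * L + 4 * (π * δ)) / (π * δ) := by
      field_simp
    rw [h3]
    exact (le_div_iff₀ hπδ).2 h2
  -- choose visiting times
  have hch : ∀ i : Fin n, ∃ t ∈ Icc (0:ℝ) 1, γ t ∈ closedBall (c i) δ := by
    intro i
    obtain ⟨p, ⟨⟨t, ht, rfl⟩, hp⟩⟩ := hvisit i
    exact ⟨t, ht, hp⟩
  choose t ht hγt using hch
  rcases n with _ | m
  · simp only [Nat.cast_zero, mul_zero]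
    positivity
  -- sort the times
  set σ := Tuple.sort t with hσ
  have hmono : Monotone (t ∘ σ) := Tuple.monotone_sort t
  set u : ℕ → ℝ := fun k => t (σ ⟨min k m, Nat.lt_succ_of_le (min_le_right _ _)⟩) with hudef
  have humono : Monotone u := by
    intro a b hab
    exact hmono (by simp only [Fin.mk_le_mk]; exact min_le_min_right m hab)
  have humem : ∀ k, u k ∈ Icc (0:ℝ) 1 := fun k => ht _
  set q : ℕ → EuclideanSpace ℝ (Fin 2) := fun k => γ (u k) with hq
  -- inclusion of the union of disks into the chain of balls
  have hsub : (⋃ i, closedBall (c i) δ) ⊆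
      ⋃ k ∈ Finset.range (m + 1), closedBall (q k) (2 * δ) := by
    intro z hz
    obtain ⟨i, hzi⟩ := Set.mem_iUnion.1 hz
    set k : Fin (m + 1) := σ⁻¹ i with hk
    have hqk : q k.1 = γ (t i) := by
      have hmin : min k.1 m = k.1 := Nat.min_eq_left (Nat.lt_succ_iff.1 k.2)
      have : (⟨min k.1 m, Nat.lt_succ_of_le (min_le_right _ _)⟩ : Fin (m + 1)) = k :=
        Fin.ext hmin
      simp only [hq, hudef, this]
      congr 1
      rw [hk]
      simp
    refine Set.mem_biUnion (Finset.mem_range.2 k.2) ?_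
    rw [hqk]
    have hdist : δ + dist (c i) (γ (t i)) ≤ 2 * δ := by
      have := hγt i
      rw [mem_closedBall] at this
      rw [dist_comm]
      linarith
    exact closedBall_subset_closedBall' hdist hzi
  -- total volume of the disks
  have hvol_eq : volume (⋃ i, closedBall (c i) δ) =
      (m + 1 : ℕ) * ENNReal.ofReal (π * δ ^ 2) := by
    rw [measure_iUnion (fun i j hij => hdisj i j hij)
      (fun i => measurableSet_closedBall)]
    simp only [vol_ball2 _ _ hδ.le, tsum_fintype, Finset.sum_const, Finset.card_univ,
      Fintype.card_fin, nsmul_eq_mul]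
  -- variation bound
  have hvar : ∑ k ∈ Finset.range m, edist (γ (u (k + 1))) (γ (u k)) ≤
      eVariationOn γ (Icc 0 1) := eVariationOn.sum_le (f := γ) (n := m) humono humem
  have hsum : ∑ k ∈ Finset.range m, ENNReal.ofReal (2 * (2 * δ) * dist (q k) (q (k + 1))) ≤
      ENNReal.ofReal (4 * δ * L) := by
    have heq : ∀ k, ENNReal.ofReal (2 * (2 * δ) * dist (q k) (q (k + 1))) =
        ENNReal.ofReal (4 * δ) * edist (γ (u (k + 1))) (γ (u k)) := by
      intro k
      rw [edist_dist, ← ENNReal.ofReal_mul (by positivity)]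
      rw [dist_comm (γ (u (k+1))) (γ (u k))]
      norm_num [hq]
      ring_nf
    calc ∑ k ∈ Finset.range m, ENNReal.ofReal (2 * (2 * δ) * dist (q k) (q (k + 1)))
        = ENNReal.ofReal (4 * δ) * ∑ k ∈ Finset.range m, edist (γ (u (k + 1))) (γ (u k)) := by
          rw [Finset.mul_sum]; exact Finset.sum_congr rfl fun k _ => heq k
      _ ≤ ENNReal.ofReal (4 * δ) * eVariationOn γ (Icc 0 1) := by
          exact mul_le_mul_right hvar _
      _ = ENNReal.ofReal (4 * δ) * ENNReal.ofReal L := by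
          rw [← hlen, ENNReal.ofReal_toReal hrect]
      _ = ENNReal.ofReal (4 * δ * L) := by
          rw [← ENNReal.ofReal_mul (by positivity)]
  -- put everything together in ENNReal
  have hmain : ((m + 1 : ℕ) : ENNReal) * ENNReal.ofReal (π * δ ^ 2) ≤
      ENNReal.ofReal (4 * δ * L + 4 * π * δ ^ 2) := by
    calc ((m + 1 : ℕ) : ENNReal) * ENNReal.ofReal (π * δ ^ 2)
        = volume (⋃ i, closedBall (c i) δ) := hvol_eq.symm
      _ ≤ volume (⋃ k ∈ Finset.range (m + 1), closedBall (q k) (2 * δ)) := measure_mono hsub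
      _ ≤ ENNReal.ofReal (π * (2 * δ) ^ 2) +
            ∑ k ∈ Finset.range m, ENNReal.ofReal (2 * (2 * δ) * dist (q k) (q (k + 1))) :=
          chain_vol (2 * δ) (by positivity) q m
      _ ≤ ENNReal.ofReal (π * (2 * δ) ^ 2) + ENNReal.ofReal (4 * δ * L) :=
          add_le_add_right hsum _
      _ = ENNReal.ofReal (4 * δ * L + 4 * π * δ ^ 2) := by
          rw [← ENNReal.ofReal_add (by positivity) (by positivity)]
          ring_nf
  have hofreal : ENNReal.ofReal (π * δ ^ 2 * ((m : ℝ) + 1)) ≤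
      ENNReal.ofReal (4 * δ * L + 4 * π * δ ^ 2) := by
    rw [ENNReal.ofReal_mul (by positivity)]
    calc ENNReal.ofReal (π * δ ^ 2) * ENNReal.ofReal ((m : ℝ) + 1)
        = ((m + 1 : ℕ) : ENNReal) * ENNReal.ofReal (π * δ ^ 2) := by
          rw [mul_comm]
          congr 1
          rw [← ENNReal.ofReal_natCast (m + 1)]
          congr 1
          push_cast
          ring
      _ ≤ _ := hmain
  have := (ENNReal.ofReal_le_ofReal_iff (by positivity)).1 hofreal
  push_cast
  linarith
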